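/- Consider the synchronous machine model in the dq-frame: differentiable functions δ, ω, i_d, i_q : ℝ → ℝ satisfying for all t: δ'(t) = ω(t) − ω_s, J·ω'(t) = −D·ω(t) − b·i_q(t) (mechanical torque input T_m = 0), L·i_d'(t) = −R·i_d(t) + L·ω(t)·i_q(t) − R_L·I·sin(δ(t)), and L·i_q'(t) = −R·i_q(t) − L·ω(t)·i_d(t) + b·ω(t) − R_L·I·cos(δ(t)). Define the storage function V(t) = (1/2)·J·ω(t)² + (1/2)·L·i_d(t)² + (1/2)·L·i_q(t)², the input u₁(t) = (I·sin(δ(t)), I·cos(δ(t))) and the output y₁(t) = (R_L·(i_d(t) + I·sin(δ(t))), R_L·(i_q(t) + I·cos(δ(t)))). Then for all t, the derivative of V at t satisfies V'(t) ≤ y₁(t)·u₁(t), i.e. V'(t) ≤ R_L·(i_d(t) + I·sin(δ(t)))·I·sin(δ(t)) + R_L·(i_q(t) + I·cos(δ(t)))·I·cos(δ(t)). (Passivity from current input to voltage output.) -/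

import Mathlib

open Real

/-- Passivity of the synchronous machine dq-model from current input
`u₁ = (I sin δ, I cos δ)` to load-bus voltage output
`y₁ = (R_L (i_d + I sin δ), R_L (i_q + I cos δ))`, with mechanical torque `T_m = 0`. -/
theorem sm_passivity
    (J L D R_s R_l R_L b I ω_s R : ℝ)
    (hJ : 0 < J) (hL : 0 < L) (hD : 0 < D)
    (hRs : 0 ≤ R_s) (hRl : 0 ≤ R_l) (hRL : 0 < R_L)
    (hR : R = R_s + R_l + R_L)
    (δ ω i_d i_q δ' ω' i_d' i_q' : ℝ → ℝ)
    (hδ : ∀ t, HasDerivAt δ (δ' t) t)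
    (hω : ∀ t, HasDerivAt ω (ω' t) t)
    (hid : ∀ t, HasDerivAt i_d (i_d' t) t)
    (hiq : ∀ t, HasDerivAt i_q (i_q' t) t)
    (heq1 : ∀ t, δ' t = ω t - ω_s)
    (heq2 : ∀ t, J * ω' t = -D * ω t - b * i_q t)
    (heq3 : ∀ t, L * i_d' t = -R * i_d t + L * ω t * i_q t - R_L * I * Real.sin (δ t))
    (heq4 : ∀ t, L * i_q' t = -R * i_q t - L * ω t * i_d t + b * ω t - R_L * I * Real.cos (δ t)) :
    ∀ t, deriv (fun s => (1/2) * J * ω s ^ 2 + (1/2) * L * i_d s ^ 2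
            + (1/2) * L * i_q s ^ 2) t
      ≤ R_L * (i_d t + I * Real.sin (δ t)) * (I * Real.sin (δ t))
        + R_L * (i_q t + I * Real.cos (δ t)) * (I * Real.cos (δ t)) := by
  intro t
  have hV : HasDerivAt (fun s => (1/2) * J * ω s ^ 2 + (1/2) * L * i_d s ^ 2
      + (1/2) * L * i_q s ^ 2)
      ((1/2) * J * (2 * ω t * ω' t) + (1/2) * L * (2 * i_d t * i_d' t)
        + (1/2) * L * (2 * i_q t * i_q' t)) t := by
    have := ((((hω t).pow 2).const_mul ((1:ℝ)/2*J)).add (((hid t).pow 2).const_mul ((1:ℝ)/2*L))).add (((hiq t).pow 2).const_mul ((1:ℝ)/2*L))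
    refine this.congr_deriv ?_
    ring
  rw [hV.deriv]
  have h2 := heq2 t
  have h3 := heq3 t
  have h4 := heq4 t
  have e2 : ω t * (J * ω' t) = ω t * (-D * ω t - b * i_q t) := by rw [h2]
  have e3 : i_d t * (L * i_d' t) = i_d t * (-R * i_d t + L * ω t * i_q t - R_L * I * Real.sin (δ t)) := by rw [h3]
  have e4 : i_q t * (L * i_q' t) = i_q t * (-R * i_q t - L * ω t * i_d t + b * ω t - R_L * I * Real.cos (δ t)) := by rw [h4]
  have hsc := Real.sin_sq_add_cos_sq (δ t)
  nlinarith [mul_nonneg hD.le (sq_nonneg (ω t)),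
    mul_nonneg hRL.le (sq_nonneg (i_d t + I * Real.sin (δ t))),
    mul_nonneg hRL.le (sq_nonneg (i_q t + I * Real.cos (δ t))),
    mul_nonneg hRs (sq_nonneg (i_d t)), mul_nonneg hRl (sq_nonneg (i_d t)),
    mul_nonneg hRs (sq_nonneg (i_q t)), mul_nonneg hRl (sq_nonneg (i_q t)),
    sq_nonneg I, mul_nonneg hRL.le (sq_nonneg I)]
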